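/- Let ρ : ℝ⁸ × ℝ⁷ → ℝ be ρ(x,t) = |x|⁴ + |t|², where |x|² = Σ_{a=0}^{7} x_a² and |t|² = Σ_{β=1}^{7} t_β². Then for every a ∈ {0,…,7}, (X_a ρ)(x,t) = 4|x|² x_a + 4 Σ_{β=1}^{7} Σ_{b=0}^{7} (E^β)_{ba} x_b t_β, and consequently Σ_{a=0}^{7} ((X_a ρ)(x,t))² = 16 ρ(x,t) |x|². -/

import Mathlib

open scoped BigOperators
open Matrix

noncomputable section

namespace OC

/-- Octonions, identified with ℝ⁸. -/
abbrev Octo : Type := Fin 8 → ℝ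

/-- The seven positively-oriented triples Ω. -/
def OmegaT : List (Fin 8 × Fin 8 × Fin 8) :=
  [(1,2,3),(2,4,6),(4,3,5),(3,6,7),(6,5,1),(5,7,2),(7,1,4)]

/-- The six permutations of a triple, with their signs. -/
def signedPerms3 (t : Fin 8 × Fin 8 × Fin 8) : List (ℝ × (Fin 8 × Fin 8 × Fin 8)) :=
  [(1,(t.1,t.2.1,t.2.2)), (1,(t.2.1,t.2.2,t.1)), (1,(t.2.2,t.1,t.2.1)),
   (-1,(t.2.1,t.1,t.2.2)), (-1,(t.1,t.2.2,t.2.1)), (-1,(t.2.2,t.2.1,t.1))]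

/-- The totally antisymmetric symbol ε with ε(α,β,γ) = 1 on Ω and vanishing on triples
that are not permutations of a triple of Ω. -/
def eps (a b c : Fin 8) : ℝ :=
  (((OmegaT.map signedPerms3).flatten).map (fun p => if p.2 = (a,b,c) then p.1 else 0)).sum

/-- Coefficient of `e d` in the product `e a * e b`: `e 0` is a two-sided unit and
`e α * e β = -δ_{αβ} e 0 + ∑ γ, ε(α,β,γ) e γ` for imaginary indices. -/
def mulCoef (a b d : Fin 8) : ℝ :=
  if a = 0 then (if d = b then 1 else 0)
  else if b = 0 then (if d = a then 1 else 0)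
  else (if a = b ∧ d = 0 then -1 else 0) + eps a b d

/-- Octonion multiplication on ℝ⁸. -/
def omul (x y : Octo) : Octo := fun d => ∑ a, ∑ b, x a * y b * mulCoef a b d

/-- The standard basis octonions e₀,…,e₇. -/
def e (a : Fin 8) : Octo := fun d => if d = a then 1 else 0

/-- Real part. -/
def reO (x : Octo) : ℝ := x 0

/-- Imaginary part. -/
def imO (x : Octo) : Octo := fun d => if d = 0 then 0 else x d

/-- Octonion conjugation. -/
def conjO (x : Octo) : Octo := fun d => if d = 0 then x 0 else -x d

/-- Squared Euclidean norm |x|². -/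
def normSq (x : Octo) : ℝ := ∑ a, (x a)^2

/-- Inverse of a nonzero octonion, q⁻¹ = q̄ / |q|². -/
def oinv (q : Octo) : Octo := (normSq q)⁻¹ • conjO q

/-- The seven quadruples Λ. -/
def LambdaT : List (Fin 8 × Fin 8 × Fin 8 × Fin 8) :=
  [(5,4,6,7),(7,3,5,1),(1,6,7,2),(2,5,1,4),(4,7,2,3),(3,1,4,6),(6,2,5,3)]

/-- The 24 permutations of a quadruple, with their signs. -/
def signedPerms4 (t : Fin 8 × Fin 8 × Fin 8 × Fin 8) :
    List (ℝ × (Fin 8 × Fin 8 × Fin 8 × Fin 8)) :=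
  let a := t.1; let b := t.2.1; let c := t.2.2.1; let d := t.2.2.2
  [ (1,(a,b,c,d)), (-1,(a,b,d,c)), (-1,(a,c,b,d)), (1,(a,c,d,b)), (1,(a,d,b,c)), (-1,(a,d,c,b)),
    (-1,(b,a,c,d)), (1,(b,a,d,c)), (1,(b,c,a,d)), (-1,(b,c,d,a)), (-1,(b,d,a,c)), (1,(b,d,c,a)),
    (1,(c,a,b,d)), (-1,(c,a,d,b)), (-1,(c,b,a,d)), (1,(c,b,d,a)), (1,(c,d,a,b)), (-1,(c,d,b,a)),
    (-1,(d,a,b,c)), (1,(d,a,c,b)), (1,(d,b,a,c)), (-1,(d,b,c,a)), (-1,(d,c,a,b)), (1,(d,c,b,a)) ]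

/-- The totally antisymmetric symbol ε₄ with value 1 on Λ and vanishing on quadruples
that are not permutations of a quadruple of Λ. -/
def eps4 (a b c d : Fin 8) : ℝ :=
  (((LambdaT.map signedPerms4).flatten).map (fun p => if p.2 = (a,b,c,d) then p.1 else 0)).sum

/-- Matrix of left multiplication by `e a`: `(Imat a) d c` is the coefficient of `e d` in
`e a * e c`. -/
def Imat (a : Fin 8) : Matrix (Fin 8) (Fin 8) ℝ := Matrix.of fun d c => mulCoef a c d

/-- Octonionic Heisenberg group multiplication on 𝕆 × Im 𝕆 (realized inside 𝕆 × 𝕆):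
`(x,t)·(y,s) = (x+y, t+s+2 Im(x ȳ))`. -/
def hmul (p q : Octo × Octo) : Octo × Octo :=
  (p.1 + q.1, p.2 + q.2 + (2:ℝ) • imO (omul p.1 (conjO q.1)))

/-- Group inverse in the octonionic Heisenberg group. -/
def hinv (p : Octo × Octo) : Octo × Octo := (-p.1, -p.2)

/-- Homogeneous norm ‖(x,t)‖ = (|x|⁴+|t|²)^{1/4}. -/
def hnorm (p : Octo × Octo) : ℝ := ((normSq p.1)^2 + normSq p.2) ^ ((1:ℝ)/4)

/-- The inversion R(x,t) = (−((|x|²e₀ − t)⁻¹)x, −t/(|x|⁴+|t|²)). -/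
def Rmap (p : Octo × Octo) : Octo × Octo :=
  (-(omul (oinv (normSq p.1 • e 0 - p.2)) p.1),
   -(((normSq p.1)^2 + normSq p.2)⁻¹ • p.2))

/-- E^β = I_β for β ∈ {1,…,7}, indexed here by `Fin 7` via `β ↦ β+1`. -/
def E7 (β : Fin 7) : Matrix (Fin 8) (Fin 8) ℝ := Imat β.succ

/-- Octonionic Heisenberg group multiplication in ℝ⁸ × ℝ⁷ coordinates. -/
def hmulC (p q : (Fin 8 → ℝ) × (Fin 7 → ℝ)) : (Fin 8 → ℝ) × (Fin 7 → ℝ) :=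
  (p.1 + q.1, fun β => p.2 β + q.2 β + 2 * ∑ a, ∑ b, E7 β a b * p.1 a * q.1 b)

/-- The left-invariant horizontal vector fields
`X_a = ∂/∂x_a + 2 ∑_{β,b} (E^β)_{ba} x_b ∂/∂t_β`. -/
def Xop (a : Fin 8) (f : ((Fin 8 → ℝ) × (Fin 7 → ℝ)) → ℝ)
    (p : (Fin 8 → ℝ) × (Fin 7 → ℝ)) : ℝ :=
  fderiv ℝ f p ((Pi.single a 1 : Fin 8 → ℝ), (0 : Fin 7 → ℝ))
    + 2 * ∑ β : Fin 7, ∑ b : Fin 8,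
        E7 β b a * p.1 b * fderiv ℝ f p ((0 : Fin 8 → ℝ), (Pi.single β 1 : Fin 7 → ℝ))

/-- ρ(x,t) = |x|⁴ + |t|². -/
def rho (p : (Fin 8 → ℝ) × (Fin 7 → ℝ)) : ℝ :=
  (∑ a, (p.1 a)^2)^2 + ∑ β, (p.2 β)^2

lemma fs0 : (0:Fin 7).succ = 1 := rfl
lemma fs1 : (1:Fin 7).succ = 2 := rfl
lemma fs2 : (2:Fin 7).succ = 3 := rfl
lemma fs3 : (3:Fin 7).succ = 4 := rfl
lemma fs4 : (4:Fin 7).succ = 5 := rfl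
lemma fs5 : (5:Fin 7).succ = 6 := rfl
lemma fs6 : (6:Fin 7).succ = 7 := rfl

set_option maxHeartbeats 2000000 in
lemma key1 (x : Fin 8 → ℝ) (t : Fin 7 → ℝ) :
    ∑ a, x a * (∑ β, ∑ b, E7 β b a * x b * t β) = 0 := by
  simp +decide [Fin.sum_univ_eight, Fin.sum_univ_seven, E7, Imat, mulCoef, eps, OmegaT, signedPerms3, fs0, fs1, fs2, fs3, fs4, fs5, fs6]
  ring

set_option maxHeartbeats 2000000 in
lemma key2 (x : Fin 8 → ℝ) (t : Fin 7 → ℝ) :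
    ∑ a, (∑ β, ∑ b, E7 β b a * x b * t β)^2 = (∑ a, (x a)^2) * (∑ β, (t β)^2) := by
  simp +decide [Fin.sum_univ_eight, Fin.sum_univ_seven, E7, Imat, mulCoef, eps, OmegaT, signedPerms3, fs0, fs1, fs2, fs3, fs4, fs5, fs6]
  ring
def coordX (a : Fin 8) : ((Fin 8 → ℝ) × (Fin 7 → ℝ)) →L[ℝ] ℝ :=
  (ContinuousLinearMap.proj a).comp (ContinuousLinearMap.fst ℝ (Fin 8 → ℝ) (Fin 7 → ℝ))

def coordT (β : Fin 7) : ((Fin 8 → ℝ) × (Fin 7 → ℝ)) →L[ℝ] ℝ :=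
  (ContinuousLinearMap.proj β).comp (ContinuousLinearMap.snd ℝ (Fin 8 → ℝ) (Fin 7 → ℝ))

lemma rho_hasFDerivAt (p : (Fin 8 → ℝ) × (Fin 7 → ℝ)) :
    HasFDerivAt rho
      (((∑ a, (p.1 a)^2) • (∑ a, (p.1 a • coordX a + p.1 a • coordX a))
          + (∑ a, (p.1 a)^2) • (∑ a, (p.1 a • coordX a + p.1 a • coordX a)))
        + ∑ β, (p.2 β • coordT β + p.2 β • coordT β)) p := by
  have hrho : rho = fun q : (Fin 8 → ℝ) × (Fin 7 → ℝ) =>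
      (∑ a, q.1 a * q.1 a) * (∑ a, q.1 a * q.1 a) + ∑ β, q.2 β * q.2 β := by
    funext q
    simp only [rho, pow_two]
  rw [hrho]
  have h1 : HasFDerivAt (fun q : (Fin 8 → ℝ) × (Fin 7 → ℝ) => ∑ a, q.1 a * q.1 a)
      (∑ a, (p.1 a • coordX a + p.1 a • coordX a)) p := by
    apply HasFDerivAt.fun_sum
    intro a _
    exact ((coordX a).hasFDerivAt (x := p)).mul ((coordX a).hasFDerivAt (x := p))
  have h2 : HasFDerivAt (fun q : (Fin 8 → ℝ) × (Fin 7 → ℝ) => ∑ β, q.2 β * q.2 β)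
      (∑ β, (p.2 β • coordT β + p.2 β • coordT β)) p := by
    apply HasFDerivAt.fun_sum
    intro β _
    exact ((coordT β).hasFDerivAt (x := p)).mul ((coordT β).hasFDerivAt (x := p))
  have h3 := (h1.fun_mul h1).fun_add h2
  simp only [pow_two]
  convert h3 using 2

lemma fderiv_rho_x (p : (Fin 8 → ℝ) × (Fin 7 → ℝ)) (a : Fin 8) :
    fderiv ℝ rho p ((Pi.single a 1 : Fin 8 → ℝ), (0 : Fin 7 → ℝ))
      = 4 * (∑ c, (p.1 c)^2) * p.1 a := by
  rw [(rho_hasFDerivAt p).fderiv]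
  simp only [coordX, coordT, ContinuousLinearMap.add_apply, ContinuousLinearMap.smul_apply,
    ContinuousLinearMap.sum_apply, ContinuousLinearMap.comp_apply,
    ContinuousLinearMap.coe_fst', ContinuousLinearMap.coe_snd', ContinuousLinearMap.proj_apply,
    Pi.single_apply, Pi.zero_apply, smul_eq_mul, mul_ite, mul_one, mul_zero, ite_mul, zero_mul,
    ite_add_ite, add_zero, zero_add, Finset.sum_ite_eq', Finset.mem_univ, if_true]
  ring

lemma fderiv_rho_t (p : (Fin 8 → ℝ) × (Fin 7 → ℝ)) (β : Fin 7) :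
    fderiv ℝ rho p ((0 : Fin 8 → ℝ), (Pi.single β 1 : Fin 7 → ℝ))
      = 2 * p.2 β := by
  rw [(rho_hasFDerivAt p).fderiv]
  simp only [coordX, coordT, ContinuousLinearMap.add_apply, ContinuousLinearMap.smul_apply,
    ContinuousLinearMap.sum_apply, ContinuousLinearMap.comp_apply,
    ContinuousLinearMap.coe_fst', ContinuousLinearMap.coe_snd', ContinuousLinearMap.proj_apply,
    Pi.single_apply, Pi.zero_apply, smul_eq_mul, mul_ite, mul_one, mul_zero, ite_mul, zero_mul,
    ite_add_ite, add_zero, zero_add, Finset.sum_ite_eq', Finset.mem_univ, if_true]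
  ring
/-- For ρ(x,t) = |x|⁴ + |t|²,
X_a ρ = 4|x|²x_a + 4 Σ_{β,b} (E^β)_{ba} x_b t_β and Σ_a (X_a ρ)² = 16 ρ |x|². -/
theorem Xop_rho (p : (Fin 8 → ℝ) × (Fin 7 → ℝ)) :
    (∀ a : Fin 8,
      Xop a rho p = 4 * (∑ c, (p.1 c)^2) * p.1 a
        + 4 * ∑ β : Fin 7, ∑ b : Fin 8, E7 β b a * p.1 b * p.2 β) ∧
    (∑ a : Fin 8, (Xop a rho p)^2 = 16 * rho p * ∑ c, (p.1 c)^2) := by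
  have hX : ∀ a : Fin 8,
      Xop a rho p = 4 * (∑ c, (p.1 c)^2) * p.1 a
        + 4 * ∑ β : Fin 7, ∑ b : Fin 8, E7 β b a * p.1 b * p.2 β := by
    intro a
    unfold Xop
    rw [fderiv_rho_x]
    simp only [fderiv_rho_t]
    congr 1
    rw [Finset.mul_sum, Finset.mul_sum]
    apply Finset.sum_congr rfl
    intro β _
    rw [Finset.mul_sum, Finset.mul_sum]
    apply Finset.sum_congr rfl
    intro b _
    ring
  refine ⟨hX, ?_⟩
  have expand : ∀ a : Fin 8, (Xop a rho p)^2
      = 16 * (∑ c, (p.1 c)^2)^2 * (p.1 a)^2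
        + 32 * (∑ c, (p.1 c)^2) * (p.1 a * (∑ β, ∑ b, E7 β b a * p.1 b * p.2 β))
        + 16 * (∑ β, ∑ b, E7 β b a * p.1 b * p.2 β)^2 := by
    intro a
    rw [hX a]
    ring
  rw [Finset.sum_congr rfl fun a _ => expand a]
  rw [Finset.sum_add_distrib, Finset.sum_add_distrib,
    ← Finset.mul_sum, ← Finset.mul_sum, ← Finset.mul_sum]
  rw [key1 p.1 p.2, key2 p.1 p.2]
  simp only [rho, mul_zero, add_zero]
  ring

end OC
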